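/- arXiv:2504.01720 — 2 statements merged into one kernel-verified Lean document; each statement's English description precedes it below -/
import Mathlib

section
/- Every input-erasing two-way simple finite automaton with ε-rules can be simulated by an ε-free one: the family of languages accepted by IETWSFAs equals the family accepted by ε-free IETWSFAs. -/
namespace IETW

/-- An input-erasing two-way general finite automaton (IETWGFA). -/
structure GFA (T : Type) : Type 1 where
  Q : Type
  finQ : Finite Q
  start : Q
  accept : Set Q
  /-- Left rules: `(x, q, p)` represents `x q → p`. -/
  ruleL : Set (List T × Q × Q)
  /-- Right rules: `(q, x, p)` represents `q x → p`. -/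
  ruleR : Set (Q × List T × Q)
  finL : ruleL.Finite
  finR : ruleR.Finite

variable {T : Type}

/-- One move, labelled by its direction (`true` = left) and the number of erased symbols. -/
inductive GFA.Step (M : GFA T) :
    List T × M.Q × List T → Bool × ℕ → List T × M.Q × List T → Prop
  | left {u v x : List T} {q p : M.Q} (h : (x, q, p) ∈ M.ruleL) :
      GFA.Step M (u ++ x, q, v) (true, x.length) (u, p, v)
  | right {u v x : List T} {q p : M.Q} (h : (q, x, p) ∈ M.ruleR) :
      GFA.Step M (u, q, x ++ v) (false, x.length) (u, p, v)

/-- A computation along a list of move labels. -/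
inductive GFA.Chain (M : GFA T) :
    List T × M.Q × List T → List (Bool × ℕ) → List T × M.Q × List T → Prop
  | nil (c) : GFA.Chain M c [] c
  | cons {c c' c'' l ls} (h : GFA.Step M c l c') (h' : GFA.Chain M c' ls c'') :
      GFA.Chain M c (l :: ls) c''

/-- `L(M)`. -/
def GFA.lang (M : GFA T) : Set (List T) :=
  {w | ∃ x y ls f, w = x ++ y ∧ f ∈ M.accept ∧ M.Chain (x, M.start, y) ls ([], f, [])}

/-- The moves strictly alternate between left and right. -/
def Alternating (ls : List (Bool × ℕ)) : Prop :=
  ls.Chain' (fun a b => a.1 ≠ b.1)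

/-- An even computation: alternating, of even length, and each odd-indexed move reads
the same number of symbols as the following move. -/
def EvenTrace (ls : List (Bool × ℕ)) : Prop :=
  ls.length % 2 = 0 ∧ Alternating ls ∧
    ∀ i, 2 * i + 1 < ls.length →
      (ls.getD (2 * i) (true, 0)).2 = (ls.getD (2 * i + 1) (true, 0)).2

/-- An initialized even computation: one move followed by an even computation. -/
def InitEvenTrace (ls : List (Bool × ℕ)) : Prop :=
  ∃ l ls', ls = l :: ls' ∧ EvenTrace ls'

/-- `L(M)_alt`. -/
def GFA.langAlt (M : GFA T) : Set (List T) :=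
  {w | ∃ x y ls f, w = x ++ y ∧ f ∈ M.accept ∧ Alternating ls ∧
    M.Chain (x, M.start, y) ls ([], f, [])}

/-- `L(M)_even`. -/
def GFA.langEven (M : GFA T) : Set (List T) :=
  {w | ∃ x y ls f, w = x ++ y ∧ f ∈ M.accept ∧ EvenTrace ls ∧
    M.Chain (x, M.start, y) ls ([], f, [])}

/-- `L(M)_init-even`. -/
def GFA.langInitEven (M : GFA T) : Set (List T) :=
  {w | ∃ x y ls f, w = x ++ y ∧ f ∈ M.accept ∧ InitEvenTrace ls ∧
    M.Chain (x, M.start, y) ls ([], f, [])}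

/-- All rules read at most one symbol (IETWSFA). -/
def GFA.Simple (M : GFA T) : Prop :=
  (∀ r ∈ M.ruleL, r.1.length ≤ 1) ∧ (∀ r ∈ M.ruleR, r.2.1.length ≤ 1)

/-- No ε-rules: every rule reads at least one symbol. -/
def GFA.EpsFree (M : GFA T) : Prop :=
  (∀ r ∈ M.ruleL, r.1 ≠ ([] : List T)) ∧ (∀ r ∈ M.ruleR, r.2.1 ≠ ([] : List T))

/-- A linear grammar: rules `A → x B y` (encoded `(A, x, some (B, y))`)
or `A → x` (encoded `(A, x, none)`). -/
structure LG (T : Type) : Type 1 where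
  N : Type
  finN : Finite N
  start : N
  rules : Set (N × List T × Option (N × List T))
  finR : rules.Finite

/-- One derivation step on sentential forms `u A v`. -/
inductive LG.Der (G : LG T) :
    List T × G.N × List T → List T × G.N × List T → Prop
  | step {u v x y : List T} {A B : G.N} (h : (A, x, some (B, y)) ∈ G.rules) :
      LG.Der G (u, A, v) (u ++ x, B, y ++ v)

/-- `L(G)`. -/
def LG.lang (G : LG T) : Set (List T) :=
  {w | ∃ u A v x, Relation.ReflTransGen G.Der ([], G.start, []) (u, A, v) ∧
    (A, x, none) ∈ G.rules ∧ w = u ++ x ++ v}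

/-- Even linear grammar: `|x| = |y|` in every rule `A → x B y`. -/
def LG.Even (G : LG T) : Prop :=
  ∀ r ∈ G.rules, ∀ B (y : List T), r.2.2 = some (B, y) → r.2.1.length = y.length


/-! ### Auxiliary construction: ε-elimination -/

/-- One ε-move: a rule reading no symbol. -/
def epsRel (M : GFA T) (q p : M.Q) : Prop :=
  ([], q, p) ∈ M.ruleL ∨ (q, [], p) ∈ M.ruleR

/-- ε-closure. -/
def ERel (M : GFA T) : M.Q → M.Q → Prop := Relation.ReflTransGen (epsRel M)

def accept' (M : GFA T) : Set M.Q := {q | ∃ f ∈ M.accept, ERel M q f}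

def ruleL' (M : GFA T) : Set (List T × M.Q × M.Q) :=
  {r | r.1 ≠ [] ∧ ∃ q', ERel M r.2.1 q' ∧ (r.1, q', r.2.2) ∈ M.ruleL}

def ruleR' (M : GFA T) : Set (M.Q × List T × M.Q) :=
  {r | r.2.1 ≠ [] ∧ ∃ q', ERel M r.1 q' ∧ (q', r.2.1, r.2.2) ∈ M.ruleR}

lemma finL' (M : GFA T) : (ruleL' M).Finite := by
  haveI := M.finQ
  apply Set.Finite.subset ((M.finL.prod Set.finite_univ).image
    (fun p : (List T × M.Q × M.Q) × M.Q => (p.1.1, p.2, p.1.2.2)))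
  rintro ⟨x, q, p⟩ ⟨-, q', -, hr⟩
  exact ⟨((x, q', p), q), ⟨hr, trivial⟩, rfl⟩

lemma finR' (M : GFA T) : (ruleR' M).Finite := by
  haveI := M.finQ
  apply Set.Finite.subset ((M.finR.prod Set.finite_univ).image
    (fun p : (M.Q × List T × M.Q) × M.Q => (p.2, p.1.2.1, p.1.2.2)))
  rintro ⟨q, x, p⟩ ⟨-, q', -, hr⟩
  exact ⟨((q', x, p), q), ⟨hr, trivial⟩, rfl⟩

/-- The ε-free automaton. -/
def elimEps (M : GFA T) : GFA T where
  Q := M.Q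
  finQ := M.finQ
  start := M.start
  accept := accept' M
  ruleL := ruleL' M
  ruleR := ruleR' M
  finL := finL' M
  finR := finR' M

lemma chain_append {M : GFA T} {a b c ls ls'} (h : M.Chain a ls b)
    (h' : M.Chain b ls' c) : M.Chain a (ls ++ ls') c := by
  induction h with
  | nil => exact h'
  | cons hs _ ih => exact GFA.Chain.cons hs (ih h')

/-- ε-moves in `M` keep the tapes unchanged. -/
lemma eps_chain {M : GFA T} {q p : M.Q} (h : ERel M q p) (x y : List T) :
    ∃ ls, M.Chain (x, q, y) ls (x, p, y) := by
  induction h using Relation.ReflTransGen.head_induction_on with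
  | refl => exact ⟨[], GFA.Chain.nil _⟩
  | head e _ ih =>
    obtain ⟨ls, hc⟩ := ih
    rcases e with hL | hR
    · have s := GFA.Step.left (M := M) (u := x) (v := y) hL
      rw [List.append_nil] at s
      exact ⟨_, GFA.Chain.cons s hc⟩
    · have s := GFA.Step.right (M := M) (u := x) (v := y) hR
      rw [List.nil_append] at s
      exact ⟨_, GFA.Chain.cons s hc⟩

lemma accept'_closed {M : GFA T} {q p : M.Q} (h : ERel M q p)
    (hp : p ∈ accept' M) : q ∈ accept' M := by
  obtain ⟨f, hf, hE⟩ := hp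
  exact ⟨f, hf, h.trans hE⟩

/-- Re-root an accepting `elimEps` computation at an ε-predecessor. -/
lemma reroot {M : GFA T} {q p : M.Q} {x y ls g} (hE : ERel M q p)
    (h : (elimEps M).Chain (x, p, y) ls ([], g, [])) (hg : g ∈ accept' M) :
    ∃ ls' g', (elimEps M).Chain (x, q, y) ls' ([], g', []) ∧ g' ∈ accept' M := by
  cases h with
  | nil =>
    exact ⟨[], q, GFA.Chain.nil _, accept'_closed hE hg⟩
  | cons hs hc =>
    cases hs with
    | left hr =>
      obtain ⟨hne, p', hEp, hrule⟩ := hr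
      exact ⟨_, g, GFA.Chain.cons
        (GFA.Step.left (M := elimEps M) ⟨hne, p', hE.trans hEp, hrule⟩) hc, hg⟩
    | right hr =>
      obtain ⟨hne, p', hEp, hrule⟩ := hr
      exact ⟨_, g, GFA.Chain.cons
        (GFA.Step.right (M := elimEps M) ⟨hne, p', hE.trans hEp, hrule⟩) hc, hg⟩

lemma fwd {M : GFA T} {c d ls} (h : M.Chain c ls d) :
    ∀ f, d = ([], f, []) → f ∈ M.accept →
      ∃ ls' g, (elimEps M).Chain c ls' ([], g, []) ∧ g ∈ accept' M := by
  induction h with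
  | nil c =>
    rintro f rfl hf
    exact ⟨[], f, GFA.Chain.nil _, f, hf, Relation.ReflTransGen.refl⟩
  | cons hs hc ih =>
    rintro f rfl hf
    obtain ⟨ls', g, hch, hg⟩ := ih f rfl hf
    cases hs with
    | left hr =>
      rename_i u v x q p
      rcases eq_or_ne x [] with rfl | hne
      · have hE : ERel M q p := Relation.ReflTransGen.single (Or.inl hr)
        rw [List.append_nil]
        exact reroot hE hch hg
      · exact ⟨_, g, GFA.Chain.cons
          (GFA.Step.left (M := elimEps M) ⟨hne, q, Relation.ReflTransGen.refl, hr⟩) hch, hg⟩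
    | right hr =>
      rename_i u v x q p
      rcases eq_or_ne x [] with rfl | hne
      · have hE : ERel M q p := Relation.ReflTransGen.single (Or.inr hr)
        rw [List.nil_append]
        exact reroot hE hch hg
      · exact ⟨_, g, GFA.Chain.cons
          (GFA.Step.right (M := elimEps M) ⟨hne, q, Relation.ReflTransGen.refl, hr⟩) hch, hg⟩

lemma bwd {M : GFA T} {c d ls} (h : (elimEps M).Chain c ls d) :
    ∀ g, d = ([], g, []) → g ∈ accept' M →
      ∃ ls' f, M.Chain c ls' ([], f, []) ∧ f ∈ M.accept := by
  induction h with
  | nil c =>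
    rintro g rfl hg
    obtain ⟨f, hf, hE⟩ := hg
    obtain ⟨ls, hch⟩ := eps_chain hE [] []
    exact ⟨ls, f, hch, hf⟩
  | cons hs hc ih =>
    rintro g rfl hg
    obtain ⟨ls', f, hch, hf⟩ := ih g rfl hg
    cases hs with
    | left hr =>
      rename_i u v x q p
      obtain ⟨hne, q', hEq, hrule⟩ := hr
      obtain ⟨ls0, hc0⟩ := eps_chain hEq (u ++ x) v
      exact ⟨_, f, chain_append hc0 (GFA.Chain.cons (GFA.Step.left hrule) hch), hf⟩
    | right hr =>
      rename_i u v x q p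
      obtain ⟨hne, q', hEq, hrule⟩ := hr
      obtain ⟨ls0, hc0⟩ := eps_chain hEq u (x ++ v)
      exact ⟨_, f, chain_append hc0 (GFA.Chain.cons (GFA.Step.right hrule) hch), hf⟩

lemma elim_lang (M : GFA T) : (elimEps M).lang = M.lang := by
  ext w
  constructor
  · rintro ⟨x, y, ls, g, rfl, hg, hch⟩
    obtain ⟨ls', f, hch', hf⟩ := bwd hch g rfl hg
    exact ⟨x, y, ls', f, rfl, hf, hch'⟩
  · rintro ⟨x, y, ls, f, rfl, hf, hch⟩
    obtain ⟨ls', g, hch', hg⟩ := fwd hch f rfl hf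
    exact ⟨x, y, ls', g, rfl, hg, hch'⟩

lemma elim_simple {M : GFA T} (hM : M.Simple) : (elimEps M).Simple := by
  constructor
  · rintro r ⟨-, q', -, hr⟩
    exact hM.1 (r.1, q', r.2.2) hr
  · rintro r ⟨-, q', -, hr⟩
    exact hM.2 (q', r.2.1, r.2.2) hr

lemma elim_epsFree (M : GFA T) : (elimEps M).EpsFree :=
  ⟨fun _ hr => hr.1, fun _ hr => hr.1⟩

theorem ietwsfa_family_eq_epsfree (T : Type) :
    {L : Set (List T) | ∃ M : GFA T, M.Simple ∧ M.lang = L} =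
      {L : Set (List T) | ∃ M : GFA T, M.Simple ∧ M.EpsFree ∧ M.lang = L} := by
  ext L
  simp only [Set.mem_setOf_eq]
  constructor
  · rintro ⟨M, hS, rfl⟩
    exact ⟨elimEps M, elim_simple hS, elim_epsFree M, elim_lang M⟩
  · rintro ⟨M, hS, -, rfl⟩
    exact ⟨M, hS, rfl⟩

end IETW
end

section
/- Every language accepted by an IETWGFA under even computation consists only of even-length strings; moreover, this inclusion into the family of even-length-string languages is strict. -/
namespace IETW

variable {T : Type}

/-! ### Auxiliary material -/

lemma step_len {M : GFA T} {c c' : List T × M.Q × List T} {l : Bool × ℕ}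
    (h : M.Step c l c') :
    c.1.length + c.2.2.length = l.2 + (c'.1.length + c'.2.2.length) := by
  cases h <;> simp <;> omega

lemma chain_len {M : GFA T} {c c' : List T × M.Q × List T} {ls : List (Bool × ℕ)}
    (h : M.Chain c ls c') :
    c.1.length + c.2.2.length = (ls.map Prod.snd).sum + (c'.1.length + c'.2.2.length) := by
  induction h with
  | nil => simp
  | cons h h' ih =>
    have := step_len h
    simp only [List.map_cons, List.sum_cons]
    omega

lemma sum_even : ∀ ls : List (Bool × ℕ), ls.length % 2 = 0 →
    (∀ i, 2 * i + 1 < ls.length →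
      (ls.getD (2 * i) (true, 0)).2 = (ls.getD (2 * i + 1) (true, 0)).2) →
    Even (ls.map Prod.snd).sum
  | [], _, _ => by simp
  | [a], h, _ => by simp at h
  | a :: b :: rest, h, hp => by
    have hab : a.2 = b.2 := hp 0 (by simp)
    have ih := sum_even rest (by simp only [List.length_cons] at h ⊢; omega) (fun i hi => by
      have h1 : 2 * (i + 1) = (2 * i + 1) + 1 := by ring
      have := hp (i + 1) (by simp; omega)
      rw [h1] at this
      simp only [List.getD_cons_succ] at this
      exact this)
    obtain ⟨r, hr⟩ := ih
    simp only [List.map_cons, List.sum_cons]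
    exact ⟨a.2 + r, by omega⟩

lemma langEven_even {M : GFA T} {w : List T} (hw : w ∈ M.langEven) : Even w.length := by
  obtain ⟨x, y, ls, f, rfl, -, ⟨hlen, -, hp⟩, hch⟩ := hw
  have := chain_len hch
  simp only [List.length_nil] at this
  obtain ⟨r, hr⟩ := sum_even ls hlen hp
  exact ⟨r, by simp; omega⟩

/-- Parameter space for normalized automata. -/
abbrev Params (T : Type) : Type :=
  ℕ × ℕ × Finset ℕ × Finset (List T × ℕ × ℕ) × Finset (ℕ × List T × ℕ)

def castF (n a : ℕ) : Fin (n + 1) := ⟨a % (n + 1), Nat.mod_lt _ n.succ_pos⟩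

lemma castF_val (n : ℕ) (q : Fin (n + 1)) : castF n (q : ℕ) = q :=
  Fin.ext (Nat.mod_eq_of_lt q.isLt)

def mkGFA (p : Params T) : GFA T where
  Q := Fin (p.1 + 1)
  finQ := inferInstance
  start := castF p.1 p.2.1
  accept := {q | (q : ℕ) ∈ p.2.2.1}
  ruleL := (fun r : List T × ℕ × ℕ => (r.1, castF p.1 r.2.1, castF p.1 r.2.2)) '' ↑p.2.2.2.1
  ruleR := (fun r : ℕ × List T × ℕ => (castF p.1 r.1, r.2.1, castF p.1 r.2.2)) '' ↑p.2.2.2.2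
  finL := (p.2.2.2.1.finite_toSet).image _
  finR := (p.2.2.2.2.finite_toSet).image _

lemma normalize (M : GFA T) : ∃ p : Params T, (mkGFA p).langEven = M.langEven := by
  haveI := M.finQ
  obtain ⟨n, ⟨e⟩⟩ := Finite.exists_equiv_fin M.Q
  match n, e with
  | 0, e => exact (e M.start).elim0
  | m + 1, e =>
  let p : Params T := (m, (e M.start : ℕ),
    ((Set.toFinite M.accept).image (fun q => ((e q : Fin (m+1)) : ℕ))).toFinset,
    (M.finL.image (fun r : List T × M.Q × M.Q => (r.1, ((e r.2.1 : Fin (m+1)) : ℕ), ((e r.2.2 : Fin (m+1)) : ℕ)))).toFinset,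
    (M.finR.image (fun r : M.Q × List T × M.Q => (((e r.1 : Fin (m+1)) : ℕ), r.2.1, ((e r.2.2 : Fin (m+1)) : ℕ)))).toFinset)
  refine ⟨p, ?_⟩
  let M' : GFA T := mkGFA p
  have hstart : M'.start = e M.start := castF_val m _
  have haccept : ∀ f : Fin (m + 1), f ∈ M'.accept ↔ ∃ q ∈ M.accept, f = e q := by
    intro f
    constructor
    · intro hf
      have hf' : (f : ℕ) ∈ ((Set.toFinite M.accept).image
          (fun q => ((e q : Fin (m+1)) : ℕ))).toFinset := hf
      rw [Set.Finite.mem_toFinset] at hf'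
      obtain ⟨q, hq, hval⟩ := hf'
      exact ⟨q, hq, (Fin.val_injective hval).symm⟩
    · rintro ⟨q, hq, rfl⟩
      have : ((e q : Fin (m+1)) : ℕ) ∈ ((Set.toFinite M.accept).image
          (fun q => ((e q : Fin (m+1)) : ℕ))).toFinset := by
        rw [Set.Finite.mem_toFinset]
        exact ⟨q, hq, rfl⟩
      exact this
  have hL : ∀ x (q f : Fin (m+1)), ((x, q, f) ∈ M'.ruleL ↔
      ∃ q0 f0, (x, q0, f0) ∈ M.ruleL ∧ q = e q0 ∧ f = e f0) := by
    intro x q f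
    constructor
    · rintro ⟨r, hr, heq⟩
      rw [Finset.mem_coe, Set.Finite.mem_toFinset] at hr
      obtain ⟨r0, hr0, rfl⟩ := hr
      simp only [castF_val] at heq
      obtain ⟨rfl, rfl, rfl⟩ := Prod.mk.injEq .. ▸ (by
        have h1 := congrArg Prod.fst heq
        have h2 := congrArg (fun z => z.2.1) heq
        have h3 := congrArg (fun z => z.2.2) heq
        exact ⟨h1.symm, h2.symm, h3.symm⟩ : x = r0.1 ∧ q = e r0.2.1 ∧ f = e r0.2.2)
      exact ⟨r0.2.1, r0.2.2, hr0, rfl, rfl⟩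
    · rintro ⟨q0, f0, h0, rfl, rfl⟩
      refine ⟨(x, (e q0 : ℕ), (e f0 : ℕ)), ?_, by simp [castF_val]⟩
      rw [Finset.mem_coe, Set.Finite.mem_toFinset]
      exact ⟨(x, q0, f0), h0, rfl⟩
  have hR : ∀ x (q f : Fin (m+1)), ((q, x, f) ∈ M'.ruleR ↔
      ∃ q0 f0, (q0, x, f0) ∈ M.ruleR ∧ q = e q0 ∧ f = e f0) := by
    intro x q f
    constructor
    · rintro ⟨r, hr, heq⟩
      rw [Finset.mem_coe, Set.Finite.mem_toFinset] at hr
      obtain ⟨r0, hr0, rfl⟩ := hr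
      simp only [castF_val] at heq
      have h1 := congrArg Prod.fst heq
      have h2 := congrArg (fun z : Fin (m+1) × List T × Fin (m+1) => z.2.1) heq
      have h3 := congrArg (fun z : Fin (m+1) × List T × Fin (m+1) => z.2.2) heq
      simp only at h1 h2 h3
      subst h1; subst h2; subst h3
      exact ⟨r0.1, r0.2.2, hr0, rfl, rfl⟩
    · rintro ⟨q0, f0, h0, rfl, rfl⟩
      refine ⟨((e q0 : ℕ), x, (e f0 : ℕ)), ?_, by simp [castF_val]⟩
      rw [Finset.mem_coe, Set.Finite.mem_toFinset]
      exact ⟨(q0, x, f0), h0, rfl⟩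
  -- configuration map
  let φ : List T × M.Q × List T → List T × M'.Q × List T := fun c => (c.1, e c.2.1, c.2.2)
  have step_fwd : ∀ {c l c'}, M.Step c l c' → M'.Step (φ c) l (φ c') := by
    intro c l c' h
    cases h with
    | left h => exact GFA.Step.left ((hL _ _ _).2 ⟨_, _, h, rfl, rfl⟩)
    | right h => exact GFA.Step.right ((hR _ _ _).2 ⟨_, _, h, rfl, rfl⟩)
  have step_bwd : ∀ {c l d}, M'.Step (φ c) l d → ∃ c', d = φ c' ∧ M.Step c l c' := by
    rintro ⟨x, q, y⟩ l d h
    generalize hc : φ (x, q, y) = fc at h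
    cases h with
    | @left u v z q1 p1 h =>
      have hx : x = u ++ z ∧ e q = q1 ∧ y = v := by
        simp only [φ, Prod.mk.injEq] at hc
        exact ⟨hc.1, (Prod.mk.inj hc.2).1, (Prod.mk.inj hc.2).2⟩
      obtain ⟨rfl, hq1, rfl⟩ := hx
      obtain ⟨q0, f0, h0, hq0, rfl⟩ := (hL _ _ _).1 (hq1 ▸ h)
      have : q = q0 := e.injective hq0
      subst this
      exact ⟨(u, f0, y), rfl, GFA.Step.left h0⟩
    | @right u v z q1 p1 h =>
      have hx : x = u ∧ e q = q1 ∧ y = z ++ v := by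
        simp only [φ, Prod.mk.injEq] at hc
        exact ⟨hc.1, (Prod.mk.inj hc.2).1, (Prod.mk.inj hc.2).2⟩
      obtain ⟨rfl, hq1, rfl⟩ := hx
      obtain ⟨q0, f0, h0, hq0, rfl⟩ := (hR _ _ _).1 (hq1 ▸ h)
      have : q = q0 := e.injective hq0
      subst this
      exact ⟨(x, f0, v), rfl, GFA.Step.right h0⟩
  have chain_fwd : ∀ {c ls c'}, M.Chain c ls c' → M'.Chain (φ c) ls (φ c') := by
    intro c ls c' h
    induction h with
    | nil => exact GFA.Chain.nil _
    | cons h h' ih => exact GFA.Chain.cons (step_fwd h) ih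
  have chain_bwd : ∀ ls c d, M'.Chain (φ c) ls d → ∃ c', d = φ c' ∧ M.Chain c ls c' := by
    intro ls
    induction ls with
    | nil =>
      intro c d h
      cases h
      exact ⟨c, rfl, GFA.Chain.nil c⟩
    | cons l ls ih =>
      intro c d h
      cases h with
      | cons h1 h2 =>
        obtain ⟨c1, rfl, hs⟩ := step_bwd h1
        obtain ⟨c', rfl, hc⟩ := ih c1 d h2
        exact ⟨c', rfl, GFA.Chain.cons hs hc⟩
  ext w
  constructor
  · rintro ⟨x, y, ls, f, rfl, hacc, het, hch⟩
    rw [hstart] at hch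
    obtain ⟨⟨d1, dq, d3⟩, hd, hch'⟩ := chain_bwd ls (x, M.start, y) _ hch
    have h1 : d1 = [] ∧ e dq = f ∧ d3 = [] := by
      simp only [φ, Prod.mk.injEq] at hd
      exact ⟨hd.1.symm, (Prod.mk.inj hd.2).1.symm, (Prod.mk.inj hd.2).2.symm⟩
    obtain ⟨rfl, hqf, rfl⟩ := h1
    obtain ⟨q0, hq0, hfq⟩ := (haccept f).1 hacc
    have : dq = q0 := e.injective (hqf.trans hfq)
    subst this
    exact ⟨x, y, ls, dq, rfl, hq0, het, hch'⟩
  · rintro ⟨x, y, ls, f, rfl, hacc, het, hch⟩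
    refine ⟨x, y, ls, e f, rfl, (haccept _).2 ⟨f, hacc, rfl⟩, het, ?_⟩
    rw [hstart]
    exact chain_fwd hch

/-- Doubling map, used to embed `List T` into even-length words. -/
def dbl : List T → List T := fun w => w.flatMap (fun a => [a, a])

lemma dbl_length (w : List T) : (dbl w).length = 2 * w.length := by
  induction w with
  | nil => simp [dbl]
  | cons a t ih => simp [dbl] at ih ⊢; omega

lemma dbl_injective : Function.Injective (dbl (T := T)) := by
  intro w1 w2 h
  induction w1 generalizing w2 with
  | nil => cases w2 with
    | nil => rfl
    | cons b t => simp [dbl] at h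
  | cons a t ih =>
    cases w2 with
    | nil => simp [dbl] at h
    | cons b t2 =>
      simp only [dbl, List.flatMap_cons, List.cons_append, List.nil_append,
        List.cons.injEq] at h
      obtain ⟨rfl, -, h3⟩ := h
      rw [ih h3]

open Cardinal in
theorem even_family_ssubset_evenLength (T : Type) [Nonempty T] :
    {L : Set (List T) | ∃ M : GFA T, M.langEven = L} ⊂
      {L : Set (List T) | ∀ w ∈ L, Even w.length} := by
  set C := {L : Set (List T) | ∃ M : GFA T, M.langEven = L} with hC
  set D := {L : Set (List T) | ∀ w ∈ L, Even w.length} with hD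
  have hsub : C ⊆ D := by
    rintro L ⟨M, rfl⟩ w hw
    exact langEven_even hw
  refine (ssubset_iff_subset_ne).2 ⟨hsub, ?_⟩
  -- cardinality argument
  haveI : Infinite (List T) := inferInstance
  set E := {w : List T // Even w.length} with hE
  set F : Params T → Set (List T) := fun p => (mkGFA p).langEven with hF
  have hCr : C = Set.range F := by
    ext L
    constructor
    · rintro ⟨M, rfl⟩
      obtain ⟨p, hp⟩ := normalize M
      exact ⟨p, hp⟩
    · rintro ⟨p, rfl⟩
      exact ⟨mkGFA p, rfl⟩
  intro heq
  -- #C ≤ #(Params T)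
  have h1 : #C ≤ #(Params T) := by
    rw [hCr]; exact Cardinal.mk_range_le
  -- #(Params T) ≤ #(List T)
  have hkey : Cardinal.aleph0 ≤ #(List T) := Cardinal.infinite_iff.1 ‹Infinite (List T)›
  have h2 : #(Params T) ≤ #(List T) := by
    have e1 : #(Finset ℕ) = Cardinal.aleph0 := by
      rw [Cardinal.mk_finset_of_infinite]; exact Cardinal.mk_nat
    have e2 : #(Finset (List T × ℕ × ℕ)) = #(List T × ℕ × ℕ) :=
      Cardinal.mk_finset_of_infinite _
    have e3 : #(Finset (ℕ × List T × ℕ)) = #(ℕ × List T × ℕ) :=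
      Cardinal.mk_finset_of_infinite _
    have p2 : #(List T × ℕ × ℕ) ≤ #(List T) := by
      simp only [Cardinal.mk_prod, Cardinal.lift_id, Cardinal.mk_nat]
      calc #(List T) * (Cardinal.aleph0 * Cardinal.aleph0)
          ≤ #(List T) * (#(List T) * #(List T)) := by
            exact mul_le_mul_right (mul_le_mul' hkey hkey) _
        _ = #(List T) := by
            rw [Cardinal.mul_eq_self hkey, Cardinal.mul_eq_self hkey]
    have p3 : #(ℕ × List T × ℕ) ≤ #(List T) := by
      simp only [Cardinal.mk_prod, Cardinal.lift_id, Cardinal.mk_nat]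
      calc Cardinal.aleph0 * (#(List T) * Cardinal.aleph0)
          ≤ #(List T) * (#(List T) * #(List T)) := by
            exact mul_le_mul' hkey (mul_le_mul' le_rfl hkey)
        _ = #(List T) := by
            rw [Cardinal.mul_eq_self hkey, Cardinal.mul_eq_self hkey]
    calc #(Params T)
        = Cardinal.aleph0 * (Cardinal.aleph0 * (#(Finset ℕ) *
            (#(Finset (List T × ℕ × ℕ)) * #(Finset (ℕ × List T × ℕ))))) := by
          simp only [Cardinal.mk_prod, Cardinal.lift_id, Cardinal.mk_nat]
      _ ≤ #(List T) * (#(List T) * (#(List T) * (#(List T) * #(List T)))) := by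
          rw [e1, e2, e3]
          exact mul_le_mul' hkey (mul_le_mul' hkey
            (mul_le_mul' hkey (mul_le_mul' p2 p3)))
      _ = #(List T) := by
          rw [Cardinal.mul_eq_self hkey, Cardinal.mul_eq_self hkey,
            Cardinal.mul_eq_self hkey, Cardinal.mul_eq_self hkey]
  -- #(List T) ≤ #E
  have h3 : #(List T) ≤ #E := by
    refine Cardinal.mk_le_of_injective (f := fun w => (⟨dbl w, ⟨w.length, by
      have := dbl_length w; omega⟩⟩ : E)) ?_
    intro w1 w2 h
    exact dbl_injective (congrArg Subtype.val h)
  -- 2 ^ #E ≤ #D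
  have h4 : (2 : Cardinal) ^ (#E) ≤ #D := by
    rw [← Cardinal.mk_set]
    refine Cardinal.mk_le_of_injective (f := fun S : Set E =>
      (⟨Subtype.val '' S, by
        rintro w ⟨⟨w', hw'⟩, -, rfl⟩
        exact hw'⟩ : D)) ?_
    intro S1 S2 h
    have := congrArg Subtype.val h
    simp only at this
    exact Set.image_injective.2 Subtype.val_injective this
  have : #D < #D := by
    calc #D = #C := by rw [heq]
      _ ≤ #(List T) := h1.trans h2
      _ ≤ #E := h3
      _ < (2 : Cardinal) ^ (#E) := Cardinal.cantor _
      _ ≤ #D := h4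
  exact absurd this (lt_irrefl _)

end IETW
end
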